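/- The map F : ℝ² → ℝ² defined by F(γ,δ) = ( 2cos(π(γ+2)/6) + 2cos(π(δ+4)/6), 1 + 4cos(π(γ+2)/6)·cos(π(δ+4)/6) ) is injective on the closed triangular region {(γ,δ) ∈ ℝ² : γ ≥ −2, δ ≤ 2, γ − δ ≤ 2}. -/
import Mathlib

lemma quad_unique {x y x' y' : ℝ} (hx : y ≤ x) (hx' : y' ≤ x')
    (hs : x + y = x' + y') (hp : x * y = x' * y') : x = x' ∧ y = y' := by
  have h : (x - y) ^ 2 = (x' - y') ^ 2 := by linear_combination (x + y + x' + y') * hs - 4 * hp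
  have h2 : x - y = x' - y' := by
    have e1 : x - y = Real.sqrt ((x - y) ^ 2) := (Real.sqrt_sq (by linarith)).symm
    have e2 : x' - y' = Real.sqrt ((x' - y') ^ 2) := (Real.sqrt_sq (by linarith)).symm
    rw [e1, e2, h]
  constructor <;> linarith

/-- Theorem B(iv) injectivity: the map from asymptotic data `(γ, δ)` to Stokes data
`(s₁ᴿ, −s₂ᴿ)` in the `n = 6` cases is injective on the region
`γ ≥ −2`, `δ ≤ 2`, `γ − δ ≤ 2`. -/
theorem stokes_injective_n6 :
    Set.InjOn
      (fun p : ℝ × ℝ =>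
        ((2 * Real.cos (Real.pi * (p.1 + 2) / 6) + 2 * Real.cos (Real.pi * (p.2 + 4) / 6),
          1 + 4 * Real.cos (Real.pi * (p.1 + 2) / 6) * Real.cos (Real.pi * (p.2 + 4) / 6)) :
          ℝ × ℝ))
      {p : ℝ × ℝ | -2 ≤ p.1 ∧ p.2 ≤ 2 ∧ p.1 - p.2 ≤ 2} := by
  rintro ⟨g, d⟩ ⟨hg, hd, hgd⟩ ⟨g', d'⟩ ⟨hg', hd', hgd'⟩ heq
  simp only [Prod.mk.injEq] at heq ⊢
  obtain ⟨h1, h2⟩ := heq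
  have pipos := Real.pi_pos
  set a := Real.pi * (g + 2) / 6 with ha
  set b := Real.pi * (d + 4) / 6 with hb
  set a' := Real.pi * (g' + 2) / 6 with ha'
  set b' := Real.pi * (d' + 4) / 6 with hb'
  have hA : 0 ≤ a := by
    rw [ha]; have := mul_nonneg pipos.le (by linarith : (0:ℝ) ≤ g + 2); linarith
  have hAB : a ≤ b := by
    rw [ha, hb]
    have := mul_le_mul_of_nonneg_left (by linarith : g + 2 ≤ d + 4) pipos.le
    linarith
  have hB : b ≤ Real.pi := by
    rw [hb]
    have := mul_le_mul_of_nonneg_left (by linarith : d + 4 ≤ 6) pipos.le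
    linarith
  have hA' : 0 ≤ a' := by
    rw [ha']; have := mul_nonneg pipos.le (by linarith : (0:ℝ) ≤ g' + 2); linarith
  have hAB' : a' ≤ b' := by
    rw [ha', hb']
    have := mul_le_mul_of_nonneg_left (by linarith : g' + 2 ≤ d' + 4) pipos.le
    linarith
  have hB' : b' ≤ Real.pi := by
    rw [hb']
    have := mul_le_mul_of_nonneg_left (by linarith : d' + 4 ≤ 6) pipos.le
    linarith
  have hcos : Real.cos b ≤ Real.cos a :=
    Real.cos_le_cos_of_nonneg_of_le_pi hA hB hAB
  have hcos' : Real.cos b' ≤ Real.cos a' :=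
    Real.cos_le_cos_of_nonneg_of_le_pi hA' hB' hAB'
  obtain ⟨hca, hcb⟩ := quad_unique hcos hcos'
    (by linarith) (by linarith)
  have haa : a = a' :=
    Real.injOn_cos ⟨hA, le_trans hAB hB⟩ ⟨hA', le_trans hAB' hB'⟩ hca
  have hbb : b = b' :=
    Real.injOn_cos ⟨le_trans hA hAB, hB⟩ ⟨le_trans hA' hAB', hB'⟩ hcb
  rw [ha, ha'] at haa
  rw [hb, hb'] at hbb
  have e1 : g + 2 = g' + 2 :=
    mul_left_cancel₀ Real.pi_ne_zero (by linear_combination 6 * haa)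
  have e2 : d + 4 = d' + 4 :=
    mul_left_cancel₀ Real.pi_ne_zero (by linear_combination 6 * hbb)
  exact ⟨by linarith, by linarith⟩
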